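/- For any countable family 𝒞 of subsets of ℕ, each having asymptotic density zero, there exists a set B ⊆ ℕ of asymptotic density zero such that every C ∈ 𝒞 is almost contained in B (i.e., C \ B is finite). -/

import Mathlib

open Filter Topology

/-- `A ⊆ ℕ` has asymptotic density `d` if `|A ∩ [1,n]|/n → d`. -/
def densTendsto (A : Set ℕ) (d : ℝ) : Prop :=
  Tendsto (fun n : ℕ => (Nat.card ↑(A ∩ Set.Icc 1 n) : ℝ) / n) atTop (𝓝 d)

lemma dens_eq_ncard (A : Set ℕ) (n : ℕ) :
    (Nat.card ↑(A ∩ Set.Icc 1 n) : ℝ) / n = ((A ∩ Set.Icc 1 n).ncard : ℝ) / n := by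
  rw [Nat.card_coe_set_eq]

lemma inter_Icc_finite (A : Set ℕ) (n : ℕ) : (A ∩ Set.Icc 1 n).Finite :=
  (Set.finite_Icc 1 n).inter_of_right A

lemma densTendsto_union {A B : Set ℕ} (hA : densTendsto A 0) (hB : densTendsto B 0) :
    densTendsto (A ∪ B) 0 := by
  have h := hA.add hB
  rw [add_zero] at h
  refine squeeze_zero (fun n => by positivity) (fun n => ?_) h
  simp only [dens_eq_ncard]
  rw [← add_div]
  apply div_le_div_of_nonneg_right ?_ (Nat.cast_nonneg n)
  rw [Set.union_inter_distrib_right]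
  exact_mod_cast Set.ncard_union_le _ _

lemma accumulate_nat_succ (f : ℕ → Set ℕ) (k : ℕ) :
    Set.accumulate f (k + 1) = Set.accumulate f k ∪ f (k + 1) := by
  ext m
  simp only [Set.mem_accumulate, Set.mem_union, Nat.le_succ_iff]
  constructor
  · rintro ⟨y, hy | rfl, hm⟩
    · exact Or.inl ⟨y, hy, hm⟩
    · exact Or.inr hm
  · rintro (⟨y, hy, hm⟩ | hm)
    · exact ⟨y, Or.inl hy, hm⟩
    · exact ⟨k + 1, Or.inr rfl, hm⟩

lemma densTendsto_accumulate (f : ℕ → Set ℕ) (hf : ∀ k, densTendsto (f k) 0) (k : ℕ) :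
    densTendsto (Set.accumulate f k) 0 := by
  induction k with
  | zero => simpa [Set.accumulate] using hf 0
  | succ k ih =>
      rw [accumulate_nat_succ]
      exact densTendsto_union ih (hf (k + 1))

theorem stmt_0 (𝒞 : Set (Set ℕ)) (hc : 𝒞.Countable)
    (hz : ∀ C ∈ 𝒞, densTendsto C 0) :
    ∃ B : Set ℕ, densTendsto B 0 ∧ ∀ C ∈ 𝒞, (C \ B).Finite := by
  rcases 𝒞.eq_empty_or_nonempty with h𝒞 | h𝒞
  · refine ⟨∅, ?_, by simp [h𝒞]⟩
    simpa [densTendsto] using tendsto_const_nhds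
  obtain ⟨f, rfl⟩ := hc.exists_eq_range h𝒞
  have hf : ∀ k, densTendsto (f k) 0 := fun k => hz (f k) ⟨k, rfl⟩
  have hacc := densTendsto_accumulate f hf
  -- thresholds
  have hthr : ∀ k : ℕ, ∃ M : ℕ, ∀ n ≥ M,
      ((Set.accumulate f k ∩ Set.Icc 1 n).ncard : ℝ) / n ≤ 1 / (k + 1) := by
    intro k
    have hpos : (0 : ℝ) < 1 / (k + 1) := by positivity
    have h := (hacc k).eventually_lt_const hpos
    obtain ⟨N, hN⟩ := eventually_atTop.1 h
    refine ⟨N, fun n hn => ?_⟩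
    rw [← dens_eq_ncard]
    exact le_of_lt (hN n hn)
  choose M hM using hthr
  set a : ℕ → ℕ := fun k => k + (Finset.range (k + 1)).sup M with ha_def
  have ha_self : ∀ k, k ≤ a k := fun k => Nat.le_add_right _ _
  have ha_M : ∀ k, M k ≤ a k := fun k =>
    le_trans (Finset.le_sup (Finset.self_mem_range_succ k)) (Nat.le_add_left _ _)
  set B : Set ℕ := ⋃ k, f k ∩ {n | a k < n} with hB_def
  refine ⟨B, ?_, ?_⟩
  · -- density zero
    rw [densTendsto, Metric.tendsto_atTop]
    intro ε hε
    obtain ⟨k, hk⟩ := exists_nat_one_div_lt hε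
    refine ⟨a k + 1, fun n hn => ?_⟩
    have hn0 : 0 < n := lt_of_lt_of_le (Nat.succ_pos _) hn
    have hakn : a k < n := hn
    -- the finite set of indices whose stair starts below n
    set F : Finset ℕ := (Finset.range n).filter (fun j => a j < n) with hF_def
    have hkF : k ∈ F := by
      simp only [hF_def, Finset.mem_filter, Finset.mem_range]
      exact ⟨lt_of_le_of_lt (ha_self k) hakn, hakn⟩
    set j : ℕ := F.max' ⟨k, hkF⟩ with hj_def
    have hjF : j ∈ F := F.max'_mem _
    have haj : a j < n := (Finset.mem_filter.1 hjF).2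
    have hkj : k ≤ j := F.le_max' k hkF
    have hsub : B ∩ Set.Icc 1 n ⊆ Set.accumulate f j ∩ Set.Icc 1 n := by
      rintro m ⟨hmB, hmI⟩
      refine ⟨?_, hmI⟩
      obtain ⟨i, hmi, hai⟩ : ∃ i, m ∈ f i ∧ a i < m := by
        simpa [hB_def] using hmB
      have hain : a i < n := lt_of_lt_of_le hai hmI.2
      have hiF : i ∈ F := by
        simp only [hF_def, Finset.mem_filter, Finset.mem_range]
        exact ⟨lt_of_le_of_lt (ha_self i) hain, hain⟩
      exact Set.mem_accumulate.2 ⟨i, F.le_max' i hiF, hmi⟩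
    have hcard : ((B ∩ Set.Icc 1 n).ncard : ℝ) ≤
        ((Set.accumulate f j ∩ Set.Icc 1 n).ncard : ℝ) := by
      exact_mod_cast Set.ncard_le_ncard hsub (inter_Icc_finite _ n)
    have hMj : ((Set.accumulate f j ∩ Set.Icc 1 n).ncard : ℝ) / n ≤ 1 / (j + 1) :=
      hM j n (le_of_lt (lt_of_le_of_lt (ha_M j) haj))
    have hjk : (1 : ℝ) / (j + 1) ≤ 1 / (k + 1) := by
      apply one_div_le_one_div_of_le (by positivity)
      exact_mod_cast Nat.succ_le_succ hkj
    have hnonneg : (0 : ℝ) ≤ ((B ∩ Set.Icc 1 n).ncard : ℝ) / n := by positivity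
    rw [Real.dist_eq, sub_zero, dens_eq_ncard, abs_of_nonneg hnonneg]
    calc ((B ∩ Set.Icc 1 n).ncard : ℝ) / n
        ≤ ((Set.accumulate f j ∩ Set.Icc 1 n).ncard : ℝ) / n := by
          apply div_le_div_of_nonneg_right hcard (Nat.cast_nonneg n)
      _ ≤ 1 / (j + 1) := hMj
      _ ≤ 1 / (k + 1) := hjk
      _ < ε := hk
  · -- almost containment
    rintro C ⟨k, rfl⟩
    apply (Set.finite_Icc 0 (a k)).subset
    intro m hm
    simp only [Set.mem_Icc]
    refine ⟨Nat.zero_le _, ?_⟩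
    by_contra hle
    push_neg at hle
    exact hm.2 (Set.mem_iUnion.2 ⟨k, hm.1, hle⟩)
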